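/- Let μ be a finite measure. The set of admissible pairs is sequentially closed in L¹(μ) × L²(μ): if (z_k, φ_k) is a sequence of admissible pairs with z_k → z in L¹(μ) and φ_k → φ in L²(μ), then (z, φ) is admissible. -/

import Mathlib

open MeasureTheory Filter Topology

noncomputable section

/-- The smoothed level set projection `P_ε`. -/
def Pe (ε t : ℝ) : ℝ := max 0 (min 1 (1 + t / ε))

/-- The level set projection `P` (Heaviside function, `P t = 1` iff `0 ≤ t`). -/
def Pstep (t : ℝ) : ℝ := if 0 ≤ t then 1 else 0

lemma Pe_continuous (ε : ℝ) : Continuous (Pe ε) :=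
  continuous_const.max (continuous_const.min (continuous_const.add (continuous_id.div_const ε)))

lemma Pe_bound (ε t : ℝ) : ‖Pe ε t‖ ≤ 1 := by
  unfold Pe
  rw [Real.norm_eq_abs, abs_le]
  refine ⟨by linarith [le_max_left (0:ℝ) (min 1 (1 + t / ε))], ?_⟩
  exact max_le (by norm_num) (min_le_left _ _)

lemma Pstep_measurable : Measurable Pstep :=
  Measurable.ite measurableSet_Ici measurable_const measurable_const

lemma Pstep_bound (t : ℝ) : ‖Pstep t‖ ≤ 1 := by
  unfold Pstep; split <;> simp

variable {X : Type*} [MeasurableSpace X] (μ : Measure X) [IsFiniteMeasure μ]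

/-- Composition `P_ε ∘ f` of the smoothed projection with an `L²` function, as an
element of `L¹` (the measure being finite). -/
def compPe (ε : ℝ) (f : Lp ℝ 2 μ) : Lp ℝ 1 μ :=
  (MemLp.of_bound ((Pe_continuous ε).comp_aestronglyMeasurable (Lp.aestronglyMeasurable f)) 1
    (Eventually.of_forall fun x => Pe_bound ε (f x))).toLp _

/-- Composition `P ∘ f` of the discontinuous projection with an `L²` function, as an
element of `L¹`. -/
def compP (f : Lp ℝ 2 μ) : Lp ℝ 1 μ :=
  (MemLp.of_bound
    (Pstep_measurable.comp_aemeasurable (Lp.aestronglyMeasurable f).aemeasurable).aestronglyMeasurable 1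
    (Eventually.of_forall fun x => Pstep_bound (f x))).toLp _

/-- A pair `(z, φ) ∈ L¹ × L²` is admissible if `z` is the `L¹` limit of `P_{ε_k} ∘ φ_k`
for some positive `ε_k → 0` and some `φ_k → φ` in `L²`. -/
def Admissible (z : Lp ℝ 1 μ) (φ : Lp ℝ 2 μ) : Prop :=
  ∃ (εs : ℕ → ℝ) (φs : ℕ → Lp ℝ 2 μ),
    (∀ k, 0 < εs k) ∧ Tendsto εs atTop (𝓝 0) ∧
    Tendsto φs atTop (𝓝 φ) ∧
    Tendsto (fun k => compPe μ (εs k) (φs k)) atTop (𝓝 z)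

/-- Step 3 of the proof of Theorem 3.2: the set of admissible pairs is sequentially
closed in `L¹(μ) × L²(μ)`: if `(z_k, φ_k)` are admissible pairs with `z_k → z` in
`L¹(μ)` and `φ_k → φ` in `L²(μ)`, then `(z, φ)` is admissible. -/
theorem admissible_seqClosed
    {X : Type*} [MeasurableSpace X] (μ : Measure X) [IsFiniteMeasure μ]
    (zs : ℕ → Lp ℝ 1 μ) (φs : ℕ → Lp ℝ 2 μ) (z : Lp ℝ 1 μ) (φ : Lp ℝ 2 μ)
    (hadm : ∀ k, Admissible μ (zs k) (φs k))
    (hz : Tendsto zs atTop (𝓝 z)) (hφ : Tendsto φs atTop (𝓝 φ)) :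
    Admissible μ z φ := by
  choose εs' ψs' hpos h0 hψ hc using hadm
  have key : ∀ k : ℕ, ∃ n, εs' k n < 1 / (k + 1) ∧ dist (ψs' k n) (φs k) < 1 / (k + 1) ∧
      dist (compPe μ (εs' k n) (ψs' k n)) (zs k) < 1 / (k + 1) := by
    intro k
    have hk : (0 : ℝ) < 1 / (k + 1) := by positivity
    have h1 : ∀ᶠ n in atTop, εs' k n < 1 / (k + 1) :=
      (h0 k).eventually (eventually_lt_nhds hk)
    have h2 : ∀ᶠ n in atTop, dist (ψs' k n) (φs k) < 1 / (k + 1) :=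
      (hψ k).eventually (Metric.ball_mem_nhds (φs k) hk)
    have h3 : ∀ᶠ n in atTop, dist (compPe μ (εs' k n) (ψs' k n)) (zs k) < 1 / (k + 1) :=
      (hc k).eventually (Metric.ball_mem_nhds (zs k) hk)
    exact ((h1.and h2).and h3).exists.imp fun n h => ⟨h.1.1, h.1.2, h.2⟩
  choose ns h1 h2 h3 using key
  have hinv : Tendsto (fun k : ℕ => 1 / ((k : ℝ) + 1)) atTop (𝓝 0) :=
    tendsto_one_div_add_atTop_nhds_zero_nat
  refine ⟨fun k => εs' k (ns k), fun k => ψs' k (ns k), fun k => hpos k (ns k), ?_, ?_, ?_⟩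
  · exact squeeze_zero (fun k => (hpos k (ns k)).le) (fun k => (h1 k).le) hinv
  · rw [tendsto_iff_dist_tendsto_zero]
    have hd : Tendsto (fun k => dist (φs k) φ) atTop (𝓝 0) :=
      tendsto_iff_dist_tendsto_zero.mp hφ
    have hsum := hinv.add hd
    rw [add_zero] at hsum
    exact squeeze_zero (fun k => dist_nonneg)
      (fun k => (dist_triangle _ (φs k) φ).trans (add_le_add (h2 k).le le_rfl)) hsum
  · rw [tendsto_iff_dist_tendsto_zero]
    have hd : Tendsto (fun k => dist (zs k) z) atTop (𝓝 0) :=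
      tendsto_iff_dist_tendsto_zero.mp hz
    have hsum := hinv.add hd
    rw [add_zero] at hsum
    exact squeeze_zero (fun k => dist_nonneg)
      (fun k => (dist_triangle _ (zs k) z).trans (add_le_add (h3 k).le le_rfl)) hsum
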